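/- Let 𝔰 be an N-dimensional complex solvable Lie algebra with ordered basis (x₁, …, x_N), and let 𝔫 ⊆ 𝔰 be a nilpotent Lie ideal with [𝔰,𝔰] ⊆ 𝔫. Since every weight α ∈ Δ vanishes on 𝔫, each α induces a linear functional ᾱ on the quotient 𝔰/𝔫. If the induced functionals {ᾱ : α ∈ Δ} span the dual space (𝔰/𝔫)*, then k(𝔰) ≥ dim 𝔰 − dim 𝔫. -/

import Mathlib

/-- The characteristic polynomial `Q_L(z₀, …, z_N) = det (z₀ I + z₁ ad x₁ + ⋯ + z_N ad x_N)`
of an `N`-dimensional complex Lie algebra with ordered basis `(x₁, …, x_N)`; the variable of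
index `0` is `z₀` and the variable of index `k.succ` is attached to the basis vector `x_k`. -/
noncomputable def lieCharPoly (N : ℕ) (L : Type) [LieRing L] [LieAlgebra ℂ L]
    (b : Module.Basis (Fin N) ℂ L) : MvPolynomial (Fin (N + 1)) ℂ :=
  Matrix.det
    ((MvPolynomial.X 0 : MvPolynomial (Fin (N + 1)) ℂ) •
        (1 : Matrix (Fin N) (Fin N) (MvPolynomial (Fin (N + 1)) ℂ)) +
      ∑ k : Fin N,
        (MvPolynomial.X k.succ : MvPolynomial (Fin (N + 1)) ℂ) •
          ((LinearMap.toMatrix b b (LieAlgebra.ad ℂ L (b k))).map (MvPolynomial.C)))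

/-- `k(Q)`: the number of distinct irreducible factors of `Q` up to scalar multiples, i.e. the
cardinality of the set of associate classes of irreducible polynomials dividing `Q`. -/
noncomputable def numIrreducibleFactors {σ : Type} (Q : MvPolynomial σ ℂ) : ℕ :=
  {a : Associates (MvPolynomial σ ℂ) | Irreducible a ∧ a ∣ Associates.mk Q}.ncard

/-- The weight space `V_α ⊆ 𝔫` of a linear functional `α : 𝔰 → ℂ`: the set of `v ∈ 𝔫` lying,
for every `x ∈ 𝔰`, in the generalized eigenspace of `(ad x)|_𝔫` for the eigenvalue `α x`. -/
noncomputable def lieWeightSpace (𝔰 : Type) [LieRing 𝔰] [LieAlgebra ℂ 𝔰]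
    (𝔫 : LieIdeal ℂ 𝔰) (α : Module.Dual ℂ 𝔰) : Submodule ℂ ↥𝔫 :=
  ⨅ x : 𝔰, Module.End.maxGenEigenspace (LieModule.toEnd ℂ 𝔰 ↥𝔫 x) (α x)

/-- The set of weights `Δ`: linear functionals with nonzero weight space. -/
noncomputable def lieWeightSet (𝔰 : Type) [LieRing 𝔰] [LieAlgebra ℂ 𝔰]
    (𝔫 : LieIdeal ℂ 𝔰) : Set (Module.Dual ℂ 𝔰) :=
  {α | lieWeightSpace 𝔰 𝔫 α ≠ ⊥}

open MvPolynomial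

/-- If `α` is a weight then, for every `x`, `α x` is an eigenvalue of `ad x`. -/
lemma det_ad_sub_smul_eq_zero {N : ℕ} {𝔰 : Type} [LieRing 𝔰] [LieAlgebra ℂ 𝔰]
    (b : Module.Basis (Fin N) ℂ 𝔰) (𝔫 : LieIdeal ℂ 𝔰) (α : Module.Dual ℂ 𝔰)
    (hα : lieWeightSpace 𝔰 𝔫 α ≠ ⊥) (x : 𝔰) :
    Matrix.det (LinearMap.toMatrix b b (LieAlgebra.ad ℂ 𝔰 x - α x • LinearMap.id)) = 0 := by
  classical
  obtain ⟨v, hv, hv0⟩ := Submodule.exists_mem_ne_zero_of_ne_bot hα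
  have hvx : v ∈ Module.End.maxGenEigenspace (LieModule.toEnd ℂ 𝔰 ↥𝔫 x) (α x) := by
    exact (Submodule.mem_iInf _).mp hv x
  rw [Module.End.mem_maxGenEigenspace] at hvx
  set T : Module.End ℂ ↥𝔫 := LieModule.toEnd ℂ 𝔰 ↥𝔫 x - α x • 1 with hT
  have hex : ∃ k, (T ^ k) v = 0 := hvx
  set k := Nat.find hex with hk
  have hk0 : k ≠ 0 := by
    intro h
    have := Nat.find_spec hex
    rw [← hk, h] at this
    simp at this
    exact hv0 this
  set w' : ↥𝔫 := (T ^ (k - 1)) v with hw'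
  have hw'0 : w' ≠ 0 := by
    intro h
    exact Nat.find_min hex (Nat.sub_lt (Nat.pos_of_ne_zero hk0) one_pos) h
  have hTw' : T w' = 0 := by
    have : (T ^ k) v = 0 := Nat.find_spec hex
    rw [hw', ← Module.End.mul_apply, ← pow_succ', Nat.sub_add_cancel (Nat.one_le_iff_ne_zero.mpr hk0)]
    exact this
  -- move to 𝔰
  set w : 𝔰 := (w' : 𝔰) with hw
  have hw0 : w ≠ 0 := by
    simpa [hw] using hw'0
  have hfw : ((LieAlgebra.ad ℂ 𝔰 x - α x • LinearMap.id : 𝔰 →ₗ[ℂ] 𝔰)) w = 0 := by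
    have := congrArg (fun u : ↥𝔫 => (u : 𝔰)) hTw'
    simpa [hT, LieModule.toEnd_apply_apply, LieAlgebra.ad_apply, sub_eq_zero] using this
  rw [← Matrix.exists_mulVec_eq_zero_iff]
  refine ⟨b.repr w, ?_, ?_⟩
  · intro h
    apply hw0
    have h2 : b.repr w = 0 := Finsupp.coe_eq_zero.mp h
    simpa using congrArg b.repr.symm h2
  · rw [LinearMap.toMatrix_mulVec_repr, hfw]
    simp

/-- The linear polynomial `z₀ + c₁ z₁ + ⋯ + c_N z_N`. -/
noncomputable def linFactor {N : ℕ} (c : Fin N → ℂ) : MvPolynomial (Fin (N + 1)) ℂ :=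
  X 0 + ∑ k, C (c k) * X k.succ

lemma finSuccEquiv_C' {N : ℕ} (a : ℂ) :
    finSuccEquiv ℂ N (MvPolynomial.C a) = Polynomial.C (MvPolynomial.C a) := by
  simp [finSuccEquiv_apply]

lemma finSuccEquiv_linFactor {N : ℕ} (c : Fin N → ℂ) :
    finSuccEquiv ℂ N (linFactor c)
      = Polynomial.X - Polynomial.C (-(∑ k, C (c k) * X k)) := by
  rw [map_neg, sub_neg_eq_add, linFactor, map_add, map_sum, map_sum Polynomial.C]
  congr 1
  · exact finSuccEquiv_X_zero
  · refine Finset.sum_congr rfl fun k _ => ?_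
    rw [map_mul, finSuccEquiv_C', finSuccEquiv_X_succ, ← Polynomial.C_mul]

/-- Each weight gives a linear factor of the characteristic polynomial. -/
lemma linFactor_dvd {N : ℕ} {𝔰 : Type} [LieRing 𝔰] [LieAlgebra ℂ 𝔰]
    (b : Module.Basis (Fin N) ℂ 𝔰) (𝔫 : LieIdeal ℂ 𝔰) (α : Module.Dual ℂ 𝔰)
    (hα : α ∈ lieWeightSet 𝔰 𝔫) :
    linFactor (fun k => α (b k)) ∣ lieCharPoly N 𝔰 b := by
  classical
  set F : MvPolynomial (Fin (N + 1)) ℂ ≃ₐ[ℂ] Polynomial (MvPolynomial (Fin N) ℂ) :=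
    finSuccEquiv ℂ N with hF
  set c : MvPolynomial (Fin N) ℂ := -(∑ k, C (α (b k)) * X k) with hc
  have hroot : (F (lieCharPoly N 𝔰 b)).eval c = 0 := by
    apply MvPolynomial.funext
    intro z
    rw [map_zero]
    set x : 𝔰 := ∑ k, z k • b k with hx
    have hαx : MvPolynomial.eval z c = -α x := by
      simp only [hc, hx, map_neg, map_sum, map_mul, eval_C, eval_X, map_smul, smul_eq_mul,
        neg_inj]
      exact Finset.sum_congr rfl fun k _ => mul_comm _ _
    -- the combined ring hom
    set H : MvPolynomial (Fin (N + 1)) ℂ →+* ℂ :=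
      (Polynomial.eval₂RingHom (MvPolynomial.eval z) (MvPolynomial.eval z c)).comp
        (F : MvPolynomial (Fin (N + 1)) ℂ →+* Polynomial (MvPolynomial (Fin N) ℂ)) with hH
    have hee : MvPolynomial.eval z ((F (lieCharPoly N 𝔰 b)).eval c)
        = H (lieCharPoly N 𝔰 b) := by
      have h0 : (F (lieCharPoly N 𝔰 b)).eval c
          = (F (lieCharPoly N 𝔰 b)).eval₂ (RingHom.id (MvPolynomial (Fin N) ℂ)) c := rfl
      rw [h0, Polynomial.hom_eval₂]
      simp [hH]
    rw [hee]
    have hFR : ∀ p : MvPolynomial (Fin (N + 1)) ℂ,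
        (F : MvPolynomial (Fin (N + 1)) ℂ →+* Polynomial (MvPolynomial (Fin N) ℂ)) p = F p :=
      fun _ => rfl
    have hH0 : H (X 0) = -α x := by
      simp [hH, hFR, hF, finSuccEquiv_X_zero, hαx]
    have hHs : ∀ k : Fin N, H (X k.succ) = z k := by
      intro k
      simp [hH, hFR, hF, finSuccEquiv_X_succ]
    have hHC : ∀ a : ℂ, H (MvPolynomial.C a) = a := by
      intro a
      simp [hH, hFR, hF, finSuccEquiv_C']
    rw [lieCharPoly, RingHom.map_det, RingHom.mapMatrix_apply]
    have hadx : LieAlgebra.ad ℂ 𝔰 x = ∑ k, z k • LieAlgebra.ad ℂ 𝔰 (b k) := by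
      have hco : ∀ y, LieAlgebra.ad ℂ 𝔰 y = (LieAlgebra.ad ℂ 𝔰 : 𝔰 →ₗ[ℂ] Module.End ℂ 𝔰) y := fun _ => rfl
      rw [hx]
      simp only [hco]
      rw [map_sum]
      exact Finset.sum_congr rfl fun k _ => map_smul _ (z k) (b k)
    have hM : (((MvPolynomial.X 0 : MvPolynomial (Fin (N + 1)) ℂ) •
        (1 : Matrix (Fin N) (Fin N) (MvPolynomial (Fin (N + 1)) ℂ)) +
      ∑ k : Fin N,
        (MvPolynomial.X k.succ : MvPolynomial (Fin (N + 1)) ℂ) •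
          ((LinearMap.toMatrix b b (LieAlgebra.ad ℂ 𝔰 (b k))).map (MvPolynomial.C))).map ⇑H)
        = LinearMap.toMatrix b b (LieAlgebra.ad ℂ 𝔰 x - α x • LinearMap.id) := by
      rw [map_sub, map_smul, LinearMap.toMatrix_id, hadx, map_sum]
      ext i j
      simp only [Matrix.map_apply, Matrix.add_apply, Matrix.smul_apply, Matrix.sum_apply,
        smul_eq_mul, map_add, map_sum, map_mul, hH0, hHs, hHC, Matrix.sub_apply,
        Matrix.one_apply, map_one, map_zero, mul_ite, mul_one, mul_zero, apply_ite H,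
        map_smul, Matrix.smul_apply]
      split_ifs <;> ring
    rw [hM]
    exact det_ad_sub_smul_eq_zero b 𝔫 α hα x
  have hdvd : F (linFactor fun k => α (b k)) ∣ F (lieCharPoly N 𝔰 b) := by
    rw [hF, finSuccEquiv_linFactor]
    exact Polynomial.dvd_iff_isRoot.mpr hroot
  have h2 := map_dvd F.symm hdvd
  simpa using h2

lemma linFactor_irreducible {N : ℕ} (c : Fin N → ℂ) : Irreducible (linFactor c) := by
  have h := Polynomial.irreducible_X_sub_C (-(∑ k, C (c k) * X k) : MvPolynomial (Fin N) ℂ)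
  have h2 : Irreducible ((finSuccEquiv ℂ N).toRingEquiv.toMulEquiv (linFactor c)) := by
    have he : (finSuccEquiv ℂ N).toRingEquiv.toMulEquiv (linFactor c)
        = finSuccEquiv ℂ N (linFactor c) := rfl
    rw [he, finSuccEquiv_linFactor]
    exact h
  exact (MulEquiv.irreducible_iff ((finSuccEquiv ℂ N).toRingEquiv.toMulEquiv)).mp h2

lemma linFactor_inj {N : ℕ} {c d : Fin N → ℂ}
    (h : Associated (linFactor c) (linFactor d)) : c = d := by
  have h2 := h.map (finSuccEquiv ℂ N).toRingEquiv.toMulEquiv.toMonoidHom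
  have he : ∀ p : MvPolynomial (Fin (N + 1)) ℂ,
      (finSuccEquiv ℂ N).toRingEquiv.toMulEquiv.toMonoidHom p = finSuccEquiv ℂ N p :=
    fun _ => rfl
  rw [he, he, finSuccEquiv_linFactor, finSuccEquiv_linFactor] at h2
  have h3 := Polynomial.eq_of_monic_of_associated
    (Polynomial.monic_X_sub_C _) (Polynomial.monic_X_sub_C _) h2
  have h4 : (∑ k, C (c k) * X k : MvPolynomial (Fin N) ℂ) = ∑ k, C (d k) * X k := by
    have := sub_right_injective h3
    have := Polynomial.C_injective this
    exact neg_injective this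
  funext j
  have h5 := congrArg (MvPolynomial.eval (Pi.single j 1)) h4
  simpa [map_sum, map_mul, eval_C, eval_X, Pi.single_apply, mul_ite, mul_one, mul_zero,
    Finset.sum_ite_eq'] using h5

lemma lieCharPoly_ne_zero {N : ℕ} {𝔰 : Type} [LieRing 𝔰] [LieAlgebra ℂ 𝔰]
    (b : Module.Basis (Fin N) ℂ 𝔰) : lieCharPoly N 𝔰 b ≠ 0 := by
  intro h
  have h1 := congrArg (MvPolynomial.eval (fun i => if i = 0 then (1 : ℂ) else 0)) h
  rw [map_zero] at h1
  apply one_ne_zero (α := ℂ)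
  rw [← h1, lieCharPoly, RingHom.map_det, RingHom.mapMatrix_apply]
  have : (((MvPolynomial.X 0 : MvPolynomial (Fin (N + 1)) ℂ) •
        (1 : Matrix (Fin N) (Fin N) (MvPolynomial (Fin (N + 1)) ℂ)) +
      ∑ k : Fin N,
        (MvPolynomial.X k.succ : MvPolynomial (Fin (N + 1)) ℂ) •
          ((LinearMap.toMatrix b b (LieAlgebra.ad ℂ 𝔰 (b k))).map (MvPolynomial.C))).map
        (MvPolynomial.eval (fun i => if i = 0 then (1 : ℂ) else 0)))
      = 1 := by
    ext i j
    simp [Matrix.map_apply, Matrix.add_apply, Matrix.smul_apply, Matrix.sum_apply,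
      Matrix.one_apply, Fin.succ_ne_zero, apply_ite]
  rw [this, Matrix.det_one]

/-- Let `𝔰` be an `N`-dimensional complex solvable Lie algebra with ordered
basis, and `𝔫 ⊆ 𝔰` a nilpotent Lie ideal with `[𝔰,𝔰] ⊆ 𝔫`.  Every weight `α ∈ Δ` vanishes on
`𝔫`, so it induces a functional `ᾱ` on `𝔰 ⧸ 𝔫`.  If the induced functionals span the dual of
`𝔰 ⧸ 𝔫`, then `k(𝔰) ≥ dim 𝔰 − dim 𝔫`. -/
theorem numIrreducibleFactors_ge_codim_of_weights_span
    (N : ℕ) (𝔰 : Type) [LieRing 𝔰] [LieAlgebra ℂ 𝔰] [LieAlgebra.IsSolvable 𝔰]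
    (b : Module.Basis (Fin N) ℂ 𝔰)
    (𝔫 : LieIdeal ℂ 𝔰) (hnil : LieRing.IsNilpotent ↥𝔫)
    (hder : ∀ x y : 𝔰, ⁅x, y⁆ ∈ 𝔫)
    (hspan : Submodule.span ℂ
        {φ : Module.Dual ℂ (𝔰 ⧸ 𝔫) | ∃ α ∈ lieWeightSet 𝔰 𝔫,
          ∀ x : 𝔰, α x = φ (LieSubmodule.Quotient.mk' 𝔫 x)} = ⊤) :
    numIrreducibleFactors (lieCharPoly N 𝔰 b) ≥
      Module.finrank ℂ 𝔰 - Module.finrank ℂ ↥𝔫 := by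
  classical
  haveI : FiniteDimensional ℂ 𝔰 := Module.Basis.finiteDimensional_of_finite b
  haveI : FiniteDimensional ℂ (𝔰 ⧸ 𝔫) :=
    inferInstanceAs (FiniteDimensional ℂ (𝔰 ⧸ 𝔫.toSubmodule))
  set Q := lieCharPoly N 𝔰 b with hQ
  have hQ0 : Q ≠ 0 := lieCharPoly_ne_zero b
  set T : Set (Associates (MvPolynomial (Fin (N + 1)) ℂ)) :=
    {a | Irreducible a ∧ a ∣ Associates.mk Q} with hT
  have hTfin : T.Finite := by
    apply Set.Finite.subset
      (Set.Finite.image Associates.mk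
        (UniqueFactorizationMonoid.factors Q).toFinset.finite_toSet)
    rintro a ⟨hairr, hadvd⟩
    obtain ⟨p, rfl⟩ := Associates.mk_surjective a
    have hpirr : Irreducible p := Associates.irreducible_mk.mp hairr
    have hpd : p ∣ Q := Associates.mk_dvd_mk.mp hadvd
    obtain ⟨q, hq, hassoc⟩ := UniqueFactorizationMonoid.exists_mem_factors_of_dvd hQ0 hpirr hpd
    exact ⟨q, by simpa using hq, (Associates.mk_eq_mk_iff_associated.mpr hassoc).symm⟩
  set W : Set (Module.Dual ℂ (𝔰 ⧸ 𝔫)) :=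
    {φ | ∃ α ∈ lieWeightSet 𝔰 𝔫, ∀ x : 𝔰, α x = φ (LieSubmodule.Quotient.mk' 𝔫 x)} with hW
  obtain ⟨s, hsW, hsspan, hsli⟩ := exists_linearIndependent ℂ W
  have hsfin : s.Finite := hsli.setFinite
  have hchoose : ∀ φ ∈ W, ∃ α, α ∈ lieWeightSet 𝔰 𝔫 ∧
      ∀ x : 𝔰, α x = φ (LieSubmodule.Quotient.mk' 𝔫 x) := fun φ h => by
    obtain ⟨α, h1, h2⟩ := h; exact ⟨α, h1, h2⟩
  set A : Module.Dual ℂ (𝔰 ⧸ 𝔫) → Module.Dual ℂ 𝔰 := fun φ =>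
    if h : φ ∈ W then (hchoose φ h).choose else 0 with hA
  have hA1 : ∀ φ ∈ W, A φ ∈ lieWeightSet 𝔰 𝔫 := fun φ h => by
    simp only [hA, dif_pos h]; exact (hchoose φ h).choose_spec.1
  have hA2 : ∀ φ, ∀ h : φ ∈ W, ∀ x : 𝔰, A φ x = φ (LieSubmodule.Quotient.mk' 𝔫 x) :=
    fun φ h => by
      simp only [hA, dif_pos h]; exact (hchoose φ h).choose_spec.2
  set f : Module.Dual ℂ (𝔰 ⧸ 𝔫) → Associates (MvPolynomial (Fin (N + 1)) ℂ) :=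
    fun φ => Associates.mk (linFactor fun k => A φ (b k)) with hf
  have hmem : ∀ φ ∈ s, f φ ∈ T := by
    intro φ hφ
    exact ⟨Associates.irreducible_mk.mpr (linFactor_irreducible _),
      Associates.mk_dvd_mk.mpr (linFactor_dvd b 𝔫 _ (hA1 φ (hsW hφ)))⟩
  have hinj : Set.InjOn f s := by
    intro φ hφ ψ hψ h
    have hassoc := Associates.mk_eq_mk_iff_associated.mp h
    have hcd := linFactor_inj hassoc
    have hαβ : A φ = A ψ := b.ext fun i => congrFun hcd i
    apply LinearMap.ext
    intro y
    obtain ⟨x, rfl⟩ := LieSubmodule.Quotient.surjective_mk' 𝔫 y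
    rw [← hA2 φ (hsW hφ) x, ← hA2 ψ (hsW hψ) x, hαβ]
  have h1 : s.ncard ≤ T.ncard := by
    rw [← Set.ncard_image_of_injOn hinj]
    exact Set.ncard_le_ncard (by rintro a ⟨φ, hφ, rfl⟩; exact hmem φ hφ) hTfin
  haveI := hsfin.fintype
  have h2 : Module.finrank ℂ (𝔰 ⧸ 𝔫) ≤ s.ncard := by
    have hd : Module.finrank ℂ (Module.Dual ℂ (𝔰 ⧸ 𝔫)) = Module.finrank ℂ (𝔰 ⧸ 𝔫) :=
      Subspace.dual_finrank_eq
    have hsp : Submodule.span ℂ s = ⊤ := by rw [hsspan, hspan]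
    calc Module.finrank ℂ (𝔰 ⧸ 𝔫)
        = Module.finrank ℂ (Module.Dual ℂ (𝔰 ⧸ 𝔫)) := hd.symm
      _ = Module.finrank ℂ (⊤ : Submodule ℂ (Module.Dual ℂ (𝔰 ⧸ 𝔫))) := (finrank_top _ _).symm
      _ = Module.finrank ℂ (Submodule.span ℂ s) := by rw [hsp]
      _ ≤ s.toFinset.card := finrank_span_le_card s
      _ = s.ncard := (Set.ncard_eq_toFinset_card' s).symm
  have h3 : Module.finrank ℂ (𝔰 ⧸ 𝔫) + Module.finrank ℂ ↥𝔫 = Module.finrank ℂ 𝔰 :=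
    Submodule.finrank_quotient_add_finrank (𝔫.toSubmodule : Submodule ℂ 𝔰)
  have h4 : numIrreducibleFactors Q = T.ncard := rfl
  have goal : numIrreducibleFactors Q ≥ Module.finrank ℂ 𝔰 - Module.finrank ℂ ↥𝔫 := by
    rw [h4]
    omega
  exact goal
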